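/- Let p be a prime, G a finite group, and P a Sylow p-subgroup of G. Let V = S₁ × S₂ × ⋯ × S_r be a normal subgroup of G that is an (internal) direct product of nonabelian simple groups S₁, …, S_r each of order divisible by p, and consider the action of G by conjugation permuting the set {S₁, …, S_r}. Let N be a normal subgroup of P of exponent p^e, and suppose an element g ∈ N has an orbit of length exactly p^e on {S₁, …, S_r}. Then this orbit is invariant under the action of N. -/

import Mathlib

open Subgroup

universe u

section Preamble

/-- The derived series of a subgroup `H` of `G`, viewed as subgroups of `G`:
`H^{(0)} = H`, `H^{(n+1)} = [H^{(n)}, H^{(n)}]`. -/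
def subgroupDerivedSeries {G : Type u} [Group G] (H : Subgroup G) : ℕ → Subgroup G
  | 0 => H
  | n + 1 => ⁅subgroupDerivedSeries H n, subgroupDerivedSeries H n⁆

/-- The image of a subgroup under conjugation by `g`. -/
def conjSubgroup {G : Type u} [Group G] (g : G) (S : Subgroup G) : Subgroup G :=
  S.map (MulAut.conj g).toMonoidHom

/-- The subgroup generated by the `k`-th powers of the elements of `S`. -/
def powerSubgroup {G : Type u} [Group G] (S : Subgroup G) (k : ℕ) : Subgroup G :=
  Subgroup.closure ((fun x => x ^ k) '' (S : Set G))

/-- A group is a (nonempty, internal) direct product of nonabelian simple subgroups. -/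
def IsProdOfNonabelianSimples (Q : Type u) [Group Q] : Prop :=
  ∃ (ι : Type) (S : ι → Subgroup Q), Nonempty ι ∧
    (∀ i, (S i).Normal) ∧ (∀ i, IsSimpleGroup (S i)) ∧
    (∀ i, ∃ a b : S i, a * b ≠ b * a) ∧
    iSupIndep S ∧ (⨆ i, S i) = ⊤

/-- A group is a (nonempty, internal) direct product of nonabelian simple subgroups,
each of order divisible by `p`. -/
def IsProdOfNonabelianSimplesDiv (p : ℕ) (Q : Type u) [Group Q] : Prop :=
  ∃ (ι : Type) (S : ι → Subgroup Q), Nonempty ι ∧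
    (∀ i, (S i).Normal) ∧ (∀ i, IsSimpleGroup (S i)) ∧
    (∀ i, ∃ a b : S i, a * b ≠ b * a) ∧ (∀ i, p ∣ Nat.card (S i)) ∧
    iSupIndep S ∧ (⨆ i, S i) = ⊤

/-- A group is `p`-soluble if it has a normal series each of whose factors is
either a `p`-group or a `p'`-group (stated elementwise on the factors). -/
def IsPSoluble (p : ℕ) (G : Type u) [Group G] : Prop :=
  ∃ (n : ℕ) (σ : ℕ → Subgroup G), σ 0 = ⊥ ∧ σ n = ⊤ ∧
    (∀ i, σ i ≤ σ (i + 1)) ∧ (∀ i, (σ i).Normal) ∧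
    ∀ i < n, (∀ x ∈ σ (i + 1), ∃ k : ℕ, x ^ p ^ k ∈ σ i) ∨
      (∀ x ∈ σ (i + 1), ∃ k : ℕ, 0 < k ∧ Nat.Coprime k p ∧ x ^ k ∈ σ i)

/-- `G` has a normal series each of whose factors is a `p`-group or a `p'`-group,
with exactly `l` `p`-group factors (the factors labelled by `c`). -/
def HasPSeriesOfLength (p : ℕ) (G : Type u) [Group G] (l : ℕ) : Prop :=
  ∃ (n : ℕ) (σ : ℕ → Subgroup G) (c : ℕ → Bool), σ 0 = ⊥ ∧ σ n = ⊤ ∧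
    (∀ i, σ i ≤ σ (i + 1)) ∧ (∀ i, (σ i).Normal) ∧
    (∀ i < n, if c i then (∀ x ∈ σ (i + 1), ∃ k : ℕ, x ^ p ^ k ∈ σ i)
      else (∀ x ∈ σ (i + 1), ∃ k : ℕ, 0 < k ∧ Nat.Coprime k p ∧ x ^ k ∈ σ i)) ∧
    ((Finset.range n).filter fun i => c i = true).card = l

/-- The `p`-length of a (`p`-soluble) finite group: the least number of `p`-group
factors in a normal series all of whose factors are `p`-groups or `p'`-groups. -/
noncomputable def pLength (p : ℕ) (G : Type u) [Group G] : ℕ :=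
  sInf {l | HasPSeriesOfLength p G l}

/-- The factor `B/A` is `p`-soluble. -/
def IsPSolubleFactor (p : ℕ) {G : Type u} [Group G] (A B : Subgroup G) : Prop :=
  ∃ h : (A.subgroupOf B).Normal, haveI := h; IsPSoluble p (B ⧸ A.subgroupOf B)

/-- The factor `B/A` is soluble. -/
def IsSolubleFactor {G : Type u} [Group G] (A B : Subgroup G) : Prop :=
  ∃ h : (A.subgroupOf B).Normal, haveI := h; IsSolvable (B ⧸ A.subgroupOf B)

/-- The factor `B/A` is nilpotent. -/
def IsNilpotentFactor {G : Type u} [Group G] (A B : Subgroup G) : Prop :=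
  ∃ h : (A.subgroupOf B).Normal, haveI := h; Group.IsNilpotent (B ⧸ A.subgroupOf B)

/-- The factor `B/A` is a nonempty direct product of nonabelian simple groups. -/
def IsSimpleProdFactor {G : Type u} [Group G] (A B : Subgroup G) : Prop :=
  ∃ h : (A.subgroupOf B).Normal, haveI := h;
    IsProdOfNonabelianSimples (B ⧸ A.subgroupOf B)

/-- The factor `B/A` is a nonempty direct product of nonabelian simple groups of
order divisible by `p`. -/
def IsSimpleProdFactorDiv (p : ℕ) {G : Type u} [Group G] (A B : Subgroup G) : Prop :=
  ∃ h : (A.subgroupOf B).Normal, haveI := h;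
    IsProdOfNonabelianSimplesDiv p (B ⧸ A.subgroupOf B)

/-- `G` has a normal series `1 = G₀ ≤ G₁ ≤ ⋯ ≤ G_{2h+1} = G` in which the `h+1`
factors `G_{i+1}/G_i` with even `i` are soluble (possibly trivial) and the `h`
factors with odd `i` are (nonempty) direct products of nonabelian simple groups. -/
def HasNonSolubleSeries (G : Type u) [Group G] (h : ℕ) : Prop :=
  ∃ σ : ℕ → Subgroup G, σ 0 = ⊥ ∧ σ (2 * h + 1) = ⊤ ∧
    (∀ i, σ i ≤ σ (i + 1)) ∧ (∀ i, (σ i).Normal) ∧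
    (∀ i ≤ 2 * h, Even i → IsSolubleFactor (σ i) (σ (i + 1))) ∧
    (∀ i ≤ 2 * h, Odd i → IsSimpleProdFactor (σ i) (σ (i + 1)))

/-- The nonsoluble length `λ(G)`: the least `h` such that `G` has a normal series
with `h` nonsoluble factors as above. -/
noncomputable def nonSolubleLength (G : Type u) [Group G] : ℕ :=
  sInf {h | HasNonSolubleSeries G h}

/-- `G` has a normal series `1 = G₀ ≤ G₁ ≤ ⋯ ≤ G_{2h+1} = G` in which the `h+1`
factors `G_{i+1}/G_i` with even `i` are `p`-soluble (possibly trivial) and the `h`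
factors with odd `i` are (nonempty) direct products of nonabelian simple groups of
order divisible by `p`. -/
def HasNonPSolubleSeries (p : ℕ) (G : Type u) [Group G] (h : ℕ) : Prop :=
  ∃ σ : ℕ → Subgroup G, σ 0 = ⊥ ∧ σ (2 * h + 1) = ⊤ ∧
    (∀ i, σ i ≤ σ (i + 1)) ∧ (∀ i, (σ i).Normal) ∧
    (∀ i ≤ 2 * h, Even i → IsPSolubleFactor p (σ i) (σ (i + 1))) ∧
    (∀ i ≤ 2 * h, Odd i → IsSimpleProdFactorDiv p (σ i) (σ (i + 1)))

/-- The non-`p`-soluble length `λ_p(G)`. -/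
noncomputable def nonPSolubleLength (p : ℕ) (G : Type u) [Group G] : ℕ :=
  sInf {h | HasNonPSolubleSeries p G h}

theorem normal_sSup {G : Type u} [Group G] {S : Set (Subgroup G)}
    (hS : ∀ H ∈ S, H.Normal) : (sSup S).Normal := by
  constructor
  intro x hx g
  rw [sSup_eq_iSup'] at hx ⊢
  refine Subgroup.iSup_induction (C := fun y => g * y * g⁻¹ ∈ ⨆ H : S, (H : Subgroup G))
    _ hx ?_ ?_ ?_
  · intro H y hy
    exact Subgroup.mem_iSup_of_mem H ((hS H H.2).conj_mem y hy g)
  · simpa using Subgroup.one_mem _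
  · intro a b ha hb
    have h : g * (a * b) * g⁻¹ = (g * a * g⁻¹) * (g * b * g⁻¹) := by group
    rw [h]; exact mul_mem ha hb

/-- The `p`-soluble radical: the largest normal `p`-soluble subgroup. -/
noncomputable def pSolubleRadical (p : ℕ) (G : Type u) [Group G] : Subgroup G :=
  sSup {H : Subgroup G | H.Normal ∧ IsPSoluble p H}

instance pSolubleRadical_normal (p : ℕ) (G : Type u) [Group G] :
    (pSolubleRadical p G).Normal :=
  normal_sSup fun _ h => h.1

/-- The soluble radical: the largest normal soluble subgroup. -/
noncomputable def solubleRadical (G : Type u) [Group G] : Subgroup G :=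
  sSup {H : Subgroup G | H.Normal ∧ IsSolvable H}

instance solubleRadical_normal (G : Type u) [Group G] : (solubleRadical G).Normal :=
  normal_sSup fun _ h => h.1

/-- `N` is a minimal normal subgroup of `G`. -/
def IsMinimalNormal {G : Type u} [Group G] (N : Subgroup G) : Prop :=
  N.Normal ∧ N ≠ ⊥ ∧ ∀ M : Subgroup G, M.Normal → M ≤ N → M = ⊥ ∨ M = N

/-- The socle: the product of all minimal normal subgroups. -/
noncomputable def socle (G : Type u) [Group G] : Subgroup G :=
  sSup {N : Subgroup G | IsMinimalNormal N}

instance socle_normal (G : Type u) [Group G] : (socle G).Normal :=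
  normal_sSup fun _ h => h.1

/-- The intersection of the normalizers of the simple factors of the socle,
i.e. the kernel of the permutation action on the simple factors of the socle. -/
noncomputable def socleKernel (G : Type u) [Group G] : Subgroup G :=
  ⨅ S ∈ {S : Subgroup G |
      S ≤ socle G ∧ (S.subgroupOf (socle G)).Normal ∧ IsSimpleGroup S},
    Subgroup.normalizer (S : Set G)

theorem mem_map_conj_iff {G : Type u} [Group G] (S : Subgroup G) (a y : G) :
    y ∈ S.map (MulAut.conj a).toMonoidHom ↔ a⁻¹ * y * a ∈ S := by
  simp only [Subgroup.mem_map, MulEquiv.coe_toMonoidHom, MulAut.conj_apply]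
  constructor
  · rintro ⟨s, hs, rfl⟩
    have h : a⁻¹ * (a * s * a⁻¹) * a = s := by group
    rwa [h]
  · intro h
    exact ⟨a⁻¹ * y * a, h, by group⟩

theorem map_conj_eq_of_normal {G : Type u} [Group G] (H : Subgroup G) (hH : H.Normal)
    (a : G) : H.map (MulAut.conj a).toMonoidHom = H := by
  ext y
  rw [mem_map_conj_iff]
  constructor
  · intro h
    have := hH.conj_mem _ h a
    have e : a * (a⁻¹ * y * a) * a⁻¹ = y := by group
    rwa [e] at this
  · intro h
    have := hH.conj_mem _ h a⁻¹
    have e : a⁻¹ * y * (a⁻¹)⁻¹ = a⁻¹ * y * a := by group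
    rwa [e] at this

theorem socleKernel_normal (G : Type u) [Group G] : (socleKernel G).Normal := by
  constructor
  intro x hx g
  simp only [socleKernel, Subgroup.mem_iInf, Set.mem_setOf_eq] at hx ⊢
  rintro S ⟨hle, hnor, hsim⟩
  set f : G ≃* G := MulAut.conj g⁻¹ with hf
  -- the conjugate subgroup
  set S' : Subgroup G := S.map f.toMonoidHom with hS'
  have h1 : S' ≤ socle G := by
    calc S' ≤ (socle G).map f.toMonoidHom := Subgroup.map_mono hle
    _ = socle G := map_conj_eq_of_normal _ (socle_normal G) g⁻¹
  have h2 : (S'.subgroupOf (socle G)).Normal := by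
    constructor
    rintro n hn gs
    rw [Subgroup.mem_subgroupOf] at hn ⊢
    rw [hS', mem_map_conj_iff] at hn ⊢
    -- hn : (g⁻¹)⁻¹ * ↑n * g⁻¹ ∈ S
    have hgsoc : g * (gs : G) * g⁻¹ ∈ socle G := (socle_normal G).conj_mem _ gs.2 g
    have hsmem : ((g⁻¹)⁻¹ * (n : G) * g⁻¹) ∈ socle G := by
      have := (socle_normal G).conj_mem _ n.2 g
      have e : g * (n : G) * g⁻¹ = (g⁻¹)⁻¹ * (n : G) * g⁻¹ := by group
      rwa [e] at this
    have key := hnor.conj_mem (⟨(g⁻¹)⁻¹ * (n : G) * g⁻¹, hsmem⟩ :  socle G)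
      (by rw [Subgroup.mem_subgroupOf]; exact hn) (⟨g * (gs : G) * g⁻¹, hgsoc⟩ : socle G)
    rw [Subgroup.mem_subgroupOf] at key
    simp only [Subgroup.coe_mul, Subgroup.coe_inv] at key ⊢
    have e : (g * (gs:G) * g⁻¹) * ((g⁻¹)⁻¹ * (n:G) * g⁻¹) * (g * (gs:G) * g⁻¹)⁻¹
        = (g⁻¹)⁻¹ * ((gs:G) * (n:G) * (gs:G)⁻¹) * g⁻¹ := by group
    rwa [e] at key
  have h3 : IsSimpleGroup S' := by
    haveI := hsim
    haveI : Nontrivial S := IsSimpleGroup.toNontrivial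
    have e : S ≃* S' := Subgroup.equivMapOfInjective S f.toMonoidHom
      (f.injective)
    haveI : Nontrivial S' := Equiv.nontrivial e.toEquiv.symm
    exact IsSimpleGroup.isSimpleGroup_of_surjective e.toMonoidHom e.surjective
  have hx' := hx S' ⟨h1, h2, h3⟩
  -- now conclude
  rw [Subgroup.mem_normalizer_iff] at hx' ⊢
  intro h
  have step1 : h ∈ S ↔ g⁻¹ * h * g ∈ S' := by
    rw [hS', mem_map_conj_iff]
    constructor
    · intro hh
      have e : (g⁻¹)⁻¹ * (g⁻¹ * h * g) * g⁻¹ = h := by group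
      rwa [e]
    · intro hh
      have e : (g⁻¹)⁻¹ * (g⁻¹ * h * g) * g⁻¹ = h := by group
      rwa [e] at hh
  have step2 : ∀ y, y ∈ S' ↔ x * y * x⁻¹ ∈ S' := hx'
  have step3 : x * (g⁻¹ * h * g) * x⁻¹ ∈ S' ↔ (g * x * g⁻¹) * h * (g * x * g⁻¹)⁻¹ ∈ S := by
    rw [hS', mem_map_conj_iff]
    constructor
    · intro hh
      have e : (g⁻¹)⁻¹ * (x * (g⁻¹ * h * g) * x⁻¹) * g⁻¹
          = (g * x * g⁻¹) * h * (g * x * g⁻¹)⁻¹ := by group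
      rwa [e] at hh
    · intro hh
      have e : (g⁻¹)⁻¹ * (x * (g⁻¹ * h * g) * x⁻¹) * g⁻¹
          = (g * x * g⁻¹) * h * (g * x * g⁻¹)⁻¹ := by group
      rwa [e]
  rw [step1, step2, step3]

/-- The `p`-kernel subgroup `K_p(G)`: the full inverse image in `G` of the
intersection of the normalizers of the simple factors of the socle of
`G/R_p(G)`. -/
noncomputable def pKernel (p : ℕ) (G : Type u) [Group G] : Subgroup G :=
  (socleKernel (G ⧸ pSolubleRadical p G)).comap (QuotientGroup.mk' (pSolubleRadical p G))

instance pKernel_normal (p : ℕ) (G : Type u) [Group G] : (pKernel p G).Normal :=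
  (socleKernel_normal _).comap _

/-- The kernel subgroup `K(G)` (the case `p = 2`, via the soluble radical). -/
noncomputable def kernelSubgroup (G : Type u) [Group G] : Subgroup G :=
  (socleKernel (G ⧸ solubleRadical G)).comap (QuotientGroup.mk' (solubleRadical G))

instance kernelSubgroup_normal (G : Type u) [Group G] : (kernelSubgroup G).Normal :=
  (socleKernel_normal _).comap _

/-- Higher `p`-kernel subgroups together with proofs of their normality. -/
noncomputable def pKernelIterAux (p : ℕ) (G : Type u) [Group G] :
    ℕ → {K : Subgroup G // K.Normal}
  | 0 => ⟨⊥, inferInstance⟩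
  | i + 1 =>
    let prev := pKernelIterAux p G i
    haveI := prev.2
    ⟨(pKernel p (G ⧸ prev.1)).comap (QuotientGroup.mk' prev.1),
      Subgroup.Normal.comap (pKernel_normal _ _) _⟩

/-- The higher `p`-kernel subgroups: `K_{p,0} = 1`, and `K_{p,i+1}` is the full
inverse image in `G` of `K_p(G/K_{p,i})`. -/
noncomputable def pKernelIter (p : ℕ) (G : Type u) [Group G] (i : ℕ) : Subgroup G :=
  (pKernelIterAux p G i).1

/-- `G` has a normal series of length `n` with all factors nilpotent. -/
def HasNilpotentSeries (G : Type u) [Group G] (n : ℕ) : Prop :=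
  ∃ σ : ℕ → Subgroup G, σ 0 = ⊥ ∧ σ n = ⊤ ∧ (∀ i, σ i ≤ σ (i + 1)) ∧
    (∀ i, (σ i).Normal) ∧ ∀ i < n, IsNilpotentFactor (σ i) (σ (i + 1))

/-- The Fitting height: the length of a shortest normal series with nilpotent factors. -/
noncomputable def fittingHeight (G : Type u) [Group G] : ℕ :=
  sInf {n | HasNilpotentSeries G n}

/-- The factor `B/A` is a direct product of a `2`-group and a `2'`-group,
not both trivial. -/
def Is2Cross2'Factor {G : Type u} [Group G] (A B : Subgroup G) : Prop :=
  ∃ h : (A.subgroupOf B).Normal, haveI := h;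
    ∃ T O : Subgroup (B ⧸ A.subgroupOf B), T.Normal ∧ O.Normal ∧
      IsPGroup 2 T ∧ (∀ x : O, Odd (orderOf x)) ∧ Disjoint T O ∧ T ⊔ O = ⊤ ∧
      (T ≠ ⊥ ∨ O ≠ ⊥)

/-- `G` has a `(2 × 2')`-series of length `n`. -/
def Has2Cross2'Series (G : Type u) [Group G] (n : ℕ) : Prop :=
  ∃ σ : ℕ → Subgroup G, σ 0 = ⊥ ∧ σ n = ⊤ ∧ (∀ i, σ i ≤ σ (i + 1)) ∧
    (∀ i, (σ i).Normal) ∧ ∀ i < n, Is2Cross2'Factor (σ i) (σ (i + 1))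

/-- The `(2 × 2')`-length `l_{2×2'}` of a (soluble) group. -/
noncomputable def l2Cross2Length (G : Type u) [Group G] : ℕ :=
  sInf {n | Has2Cross2'Series G n}

/-- `L_{2×2'}(G)`: the maximum of the `(2×2')`-lengths of soluble subgroups of `G`. -/
noncomputable def L2Cross2 (G : Type u) [Group G] : ℕ :=
  sSup {n | ∃ H : Subgroup G, IsSolvable H ∧ l2Cross2Length H = n}

/-- The commutator `[a,b] = a⁻¹b⁻¹ab`. -/
def cmt {G : Type u} [Group G] (a b : G) : G := a⁻¹ * b⁻¹ * a * b

/-- The words `δ_k`: `δ_0(x) = x` and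
`δ_k(x₁,…,x_{2^k}) = [δ_{k-1}(x₁,…,x_{2^{k-1}}), δ_{k-1}(x_{2^{k-1}+1},…,x_{2^k})]`. -/
def deltaWord {G : Type u} [Group G] : (k : ℕ) → (Fin (2 ^ k) → G) → G
  | 0, x => x ⟨0, by norm_num⟩
  | k + 1, x =>
    cmt (deltaWord k fun i => x ⟨i.1, by have := i.2; rw [pow_succ]; omega⟩)
        (deltaWord k fun i => x ⟨2 ^ k + i.1, by have := i.2; rw [pow_succ]; omega⟩)

end Preamble


section AuxiliaryForOrbit

open Pointwise

variable {G : Type u} [Group G]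

theorem mem_conjSubgroup_iff (S : Subgroup G) (a y : G) :
    y ∈ conjSubgroup a S ↔ a⁻¹ * y * a ∈ S :=
  mem_map_conj_iff S a y

theorem conjSubgroup_mul (a b : G) (T : Subgroup G) :
    conjSubgroup (a * b) T = conjSubgroup a (conjSubgroup b T) := by
  ext y
  rw [mem_conjSubgroup_iff, mem_conjSubgroup_iff, mem_conjSubgroup_iff]
  constructor
  · intro h
    have e : b⁻¹ * (a⁻¹ * y * a) * b = (a * b)⁻¹ * y * (a * b) := by group
    rwa [e]
  · intro h
    have e : b⁻¹ * (a⁻¹ * y * a) * b = (a * b)⁻¹ * y * (a * b) := by group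
    rwa [← e]

theorem conjSubgroup_one (T : Subgroup G) : conjSubgroup 1 T = T := by
  ext y
  rw [mem_conjSubgroup_iff]
  simp

theorem conj_mem_conjSubgroup (T : Subgroup G) (c a : G) (ha : a ∈ T) :
    c * a * c⁻¹ ∈ conjSubgroup c T := by
  rw [mem_conjSubgroup_iff]
  have e : c⁻¹ * (c * a * c⁻¹) * c = a := by group
  rwa [e]

/-- In a finite group, every subgroup that is normal-in-`V` of order divisible by `p`
and contained in the normal subgroup `V` contains a nontrivial element of any
Sylow `p`-subgroup `P` of `G`. -/
theorem exists_pelem_aux (p : ℕ) (hp : p.Prime) [Finite G]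
    (P : Sylow p G) (V : Subgroup G) (hV : V.Normal) (T : Subgroup G) (hTV : T ≤ V)
    (hTnorm : (T.subgroupOf V).Normal) (hTdiv : p ∣ Nat.card ↥T) :
    ∃ s : G, s ∈ P ∧ s ∈ T ∧ s ≠ 1 := by
  classical
  haveI : Fact p.Prime := ⟨hp⟩
  haveI : Finite (Sylow p G) := by
    refine Finite.of_injective (fun Q : Sylow p G => ((Q : Subgroup G) : Set G)) ?_
    intro A B h
    exact Sylow.ext (SetLike.coe_injective h)
  obtain ⟨s₁, hs₁⟩ := exists_prime_orderOf_dvd_card' (G := ↥T) p hTdiv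
  set s₁' : ↥V := ⟨(s₁ : G), hTV s₁.2⟩ with hs₁'def
  -- the subgroup `P ⊓ V`, viewed inside `V`
  set W : Subgroup G := (P : Subgroup G) ⊓ V with hW
  set W' : Subgroup ↥V := W.subgroupOf V with hW'
  have hWp : IsPGroup p W := P.2.to_le inf_le_left
  have hW'p : IsPGroup p W' := hWp.comap_subtype
  obtain ⟨Q₀, hQ₀⟩ := hW'p.exists_le_sylow
  have hQ₀m : IsPGroup p ((Q₀ : Subgroup ↥V).map V.subtype) := Q₀.2.map V.subtype
  obtain ⟨P₂, hP₂⟩ := hQ₀m.exists_le_sylow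
  obtain ⟨c, hc⟩ := MulAction.exists_smul_eq G P₂ P
  have hcP : ∀ z ∈ (P₂ : Subgroup G), c * z * c⁻¹ ∈ (P : Subgroup G) := by
    intro z hz
    have h1 : MulAut.conj c • z ∈ MulAut.conj c • (P₂ : Subgroup G) :=
      Subgroup.smul_mem_pointwise_smul z _ _ hz
    have h2 : MulAut.conj c • (P₂ : Subgroup G) = (P : Subgroup G) := by
      rw [← Sylow.pointwise_smul_def, ← Sylow.smul_def, hc]
    rw [h2] at h1
    simpa [MulAut.smul_def] using h1
  -- the conjugate of (the image of) Q₀ lands in P ⊓ V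
  set R : Subgroup G := ((Q₀ : Subgroup ↥V).map V.subtype).map (MulAut.conj c).toMonoidHom
    with hR
  have hRW : R ≤ W := by
    rintro _ ⟨z, hz, rfl⟩
    have hzV : z ∈ V := by
      rcases hz with ⟨w, _, rfl⟩
      exact w.2
    refine Subgroup.mem_inf.mpr ⟨?_, ?_⟩
    · simpa [MulAut.conj_apply] using hcP z (hP₂ hz)
    · simpa [MulAut.conj_apply] using hV.conj_mem z hzV c
  -- cardinalities
  have hcardR : Nat.card R = Nat.card (Q₀ : Subgroup ↥V) := by
    have e1 : ↥((Q₀ : Subgroup ↥V).map V.subtype) ≃ ↥(Q₀ : Subgroup ↥V) :=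
      ((Q₀ : Subgroup ↥V).equivMapOfInjective V.subtype V.subtype_injective).toEquiv.symm
    have e2 : ↥R ≃ ↥((Q₀ : Subgroup ↥V).map V.subtype) :=
      (((Q₀ : Subgroup ↥V).map V.subtype).equivMapOfInjective
        (MulAut.conj c).toMonoidHom (MulAut.conj c).injective).toEquiv.symm
    rw [Nat.card_congr e2, Nat.card_congr e1]
  have hcardW : Nat.card W' = Nat.card W :=
    Nat.card_congr (Subgroup.subgroupOfEquivOfLe (inf_le_right : W ≤ V)).toEquiv
  have hcardle : Nat.card (Q₀ : Subgroup ↥V) ≤ Nat.card W' := by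
    rw [hcardW, ← hcardR]
    exact Subgroup.card_le_of_le hRW
  have hQ₀W' : (Q₀ : Subgroup ↥V) = W' := by
    apply SetLike.coe_injective
    refine (Set.eq_of_subset_of_ncard_le hQ₀ ?_ (Set.toFinite _)).symm
    rw [← Nat.card_coe_set_eq, ← Nat.card_coe_set_eq]
    exact hcardle
  -- now conjugate s₁ (inside V) into Q₀
  have hords₁ : orderOf s₁' = p := by
    have h1 : orderOf (s₁ : G) = p := by
      rw [← hs₁]
      exact orderOf_injective T.subtype T.subtype_injective s₁
    have h2 : orderOf s₁' = orderOf ((s₁' : G)) :=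
      (orderOf_injective V.subtype V.subtype_injective s₁').symm
    rw [h2]
    exact h1
  have hZp : IsPGroup p (Subgroup.zpowers s₁') :=
    IsPGroup.of_card (by rw [Nat.card_zpowers, hords₁, pow_one])
  obtain ⟨Q₁, hQ₁⟩ := hZp.exists_le_sylow
  obtain ⟨v, hv⟩ := MulAction.exists_smul_eq ↥V Q₁ Q₀
  have hs₁Q₁ : s₁' ∈ Q₁ := hQ₁ (Subgroup.mem_zpowers s₁')
  have hmem : v * s₁' * v⁻¹ ∈ (Q₀ : Subgroup ↥V) := by
    have h1 : MulAut.conj v • s₁' ∈ MulAut.conj v • (Q₁ : Subgroup ↥V) :=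
      Subgroup.smul_mem_pointwise_smul s₁' _ _ hs₁Q₁
    have h2 : MulAut.conj v • (Q₁ : Subgroup ↥V) = (Q₀ : Subgroup ↥V) := by
      rw [← Sylow.pointwise_smul_def, ← Sylow.smul_def, hv]
    rw [h2] at h1
    simpa [MulAut.smul_def] using h1
  rw [hQ₀W'] at hmem
  -- the element we want
  set s₂ : ↥V := v * s₁' * v⁻¹ with hs₂
  have hs₂P : (s₂ : G) ∈ (P : Subgroup G) := by
    have := (Subgroup.mem_subgroupOf.mp hmem)
    exact (Subgroup.mem_inf.mp this).1
  have hs₂T : (s₂ : G) ∈ T := by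
    have hs₁T : s₁' ∈ T.subgroupOf V := by
      rw [Subgroup.mem_subgroupOf]
      exact s₁.2
    have := hTnorm.conj_mem s₁' hs₁T v
    exact Subgroup.mem_subgroupOf.mp this
  have hs₂ne : (s₂ : G) ≠ 1 := by
    intro h
    have hs₂1 : s₂ = 1 := Subtype.ext (by simpa using h)
    have : s₁' = 1 := by
      have := congrArg (fun z => v⁻¹ * z * v) hs₂1
      simpa [hs₂, mul_assoc] using this
    rw [this, orderOf_one] at hords₁
    exact hp.ne_one hords₁.symm
  exact ⟨(s₂ : G), hs₂P, hs₂T, hs₂ne⟩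

end AuxiliaryForOrbit

theorem mul_pow_conj_list {G : Type u} [Group G] (u v : G) :
    ∀ m : ℕ, (u * v) ^ (m + 1)
      = u * ((List.range m).map fun j => v ^ (j + 1) * u * (v ^ (j + 1))⁻¹).prod * v ^ (m + 1)
  | 0 => by simp
  | m + 1 => by
    rw [pow_succ, mul_pow_conj_list u v m, List.range_succ, List.map_append, List.prod_append]
    simp only [List.map_cons, List.map_nil, List.prod_cons, List.prod_nil, mul_one]
    rw [pow_succ v (m + 1)]
    group

/-- Let `V = S₁ × ⋯ × S_r` be a normal subgroup of a finite group `G`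
that is a direct product of nonabelian simple subgroups of order divisible by `p`, on
whose set of factors `G` acts by conjugation.  If `N` is a normal subgroup of a Sylow
`p`-subgroup `P` of exponent `p ^ e` and `g ∈ N` has an orbit of length exactly `p ^ e`
on the factors, then this orbit is invariant under `N`. -/
theorem orbit_invariant_of_exponent
    (p : ℕ) (hp : p.Prime) (G : Type u) [Group G] [Finite G] (P : Sylow p G)
    (r : ℕ) (hr : 1 ≤ r) (S : Fin r → Subgroup G) (V : Subgroup G) (hV : V.Normal)
    (hSnorm : ∀ i, ((S i).subgroupOf V).Normal)
    (hSsimple : ∀ i, IsSimpleGroup ↥(S i))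
    (hSnonab : ∀ i, ∃ a b : ↥(S i), a * b ≠ b * a)
    (hSdiv : ∀ i, p ∣ Nat.card ↥(S i))
    (hindep : iSupIndep S) (hsup : (⨆ i, S i) = V)
    (hperm : ∀ g : G, ∀ i, ∃ j, conjSubgroup g (S i) = S j)
    (N : Subgroup G) (hNP : N ≤ (P : Subgroup G)) (hNnorm : (N.subgroupOf (P : Subgroup G)).Normal)
    (e : ℕ) (hexp : Monoid.exponent ↥N = p ^ e)
    (g : G) (hg : g ∈ N) (i₀ : Fin r)
    (horb : Set.ncard {T : Subgroup G | ∃ k : ℤ, conjSubgroup (g ^ k) (S i₀) = T} = p ^ e) :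
    ∀ x ∈ N, ∀ T ∈ {T : Subgroup G | ∃ k : ℤ, conjSubgroup (g ^ k) (S i₀) = T},
      conjSubgroup x T ∈ {T : Subgroup G | ∃ k : ℤ, conjSubgroup (g ^ k) (S i₀) = T} := by
  classical
  intro x hx T hT
  by_contra hcon
  have hSleV : ∀ i, S i ≤ V := fun i => hsup ▸ le_iSup S i
  set n : ℕ := p ^ e with hndef
  have hnpos : 0 < n := hndef ▸ pow_pos hp.pos e
  -- g has order dividing n
  have hgn : g ^ n = 1 := by
    have h1 : (⟨g, hg⟩ : ↥N) ^ n = 1 := by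
      rw [← hexp]; exact Monoid.pow_exponent_eq_one _
    simpa using congrArg (fun z : ↥N => (z : G)) h1
  have hgnz : g ^ (n : ℤ) = 1 := by rw [zpow_natCast, hgn]
  -- basic facts about the orbit
  have hΩconj : ∀ (m : ℤ) (U : Subgroup G),
      U ∈ {T : Subgroup G | ∃ k : ℤ, conjSubgroup (g ^ k) (S i₀) = T} →
      conjSubgroup (g ^ m) U ∈ {T : Subgroup G | ∃ k : ℤ, conjSubgroup (g ^ k) (S i₀) = T} := by
    rintro m U ⟨k, rfl⟩
    exact ⟨m + k, by rw [zpow_add, conjSubgroup_mul]⟩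
  have hΩconj' : ∀ (m : ℤ) (U : Subgroup G),
      conjSubgroup (g ^ m) U ∈ {T : Subgroup G | ∃ k : ℤ, conjSubgroup (g ^ k) (S i₀) = T} →
      U ∈ {T : Subgroup G | ∃ k : ℤ, conjSubgroup (g ^ k) (S i₀) = T} := by
    intro m U h
    have h2 := hΩconj (-m) _ h
    rwa [← conjSubgroup_mul, ← zpow_add, neg_add_cancel, zpow_zero, conjSubgroup_one] at h2
  have hSΩ : S i₀ ∈ {T : Subgroup G | ∃ k : ℤ, conjSubgroup (g ^ k) (S i₀) = T} :=
    ⟨0, by rw [zpow_zero, conjSubgroup_one]⟩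
  -- normality of N in P, elementwise
  have hconjN : ∀ q ∈ (P : Subgroup G), ∀ a ∈ N, q * a * q⁻¹ ∈ N := by
    intro q hq a ha
    have h1 : (⟨a, hNP ha⟩ : ↥(P : Subgroup G)) ∈ N.subgroupOf (P : Subgroup G) := by
      rwa [Subgroup.mem_subgroupOf]
    have h2 := hNnorm.conj_mem _ h1 ⟨q, hq⟩
    rwa [Subgroup.mem_subgroupOf] at h2
  -- the orbit is the image of `Finset.range n`
  have horbimg : {T : Subgroup G | ∃ k : ℤ, conjSubgroup (g ^ k) (S i₀) = T}
      = ↑((Finset.range n).image fun k : ℕ => conjSubgroup (g ^ k) (S i₀)) := by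
    ext U
    simp only [Set.mem_setOf_eq, Finset.coe_image, Set.mem_image, Finset.mem_coe,
      Finset.mem_range]
    constructor
    · rintro ⟨k, rfl⟩
      have hnz : (n : ℤ) ≠ 0 := by exact_mod_cast hnpos.ne'
      have h0 : (0 : ℤ) ≤ k % (n : ℤ) := Int.emod_nonneg k hnz
      have h1 : k % (n : ℤ) < (n : ℤ) := Int.emod_lt_of_pos k (by exact_mod_cast hnpos)
      refine ⟨(k % (n : ℤ)).toNat, by omega, ?_⟩
      have hred : g ^ k = g ^ (k % (n : ℤ)) := by
        conv_lhs => rw [← Int.emod_add_mul_ediv k (n : ℤ)]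
        rw [zpow_add, zpow_mul, hgnz, one_zpow, mul_one]
      rw [hred, ← zpow_natCast g ((k % (n : ℤ)).toNat), Int.toNat_of_nonneg h0]
    · rintro ⟨k, hk, rfl⟩
      exact ⟨(k : ℤ), by rw [zpow_natCast]⟩
  have hinj : Set.InjOn (fun k : ℕ => conjSubgroup (g ^ k) (S i₀)) ↑(Finset.range n) := by
    apply Finset.injOn_of_card_image_eq
    rw [Finset.card_range]
    rw [horbimg, Set.ncard_coe_finset] at horb
    exact horb
  -- a nontrivial p-element of P inside the factor S i₀
  obtain ⟨s, hsP, hsS, hs1⟩ :=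
    exists_pelem_aux p hp P V hV (S i₀) (hSleV i₀) (hSnorm i₀) (hSdiv i₀)
  -- the element y moving S i₀ out of the orbit
  obtain ⟨k₀, hk₀⟩ := hT
  set y : G := x * g ^ k₀ with hydef
  have hyN : y ∈ N := N.mul_mem hx (N.zpow_mem hg k₀)
  have hyM : conjSubgroup y (S i₀) ∉
      {T : Subgroup G | ∃ k : ℤ, conjSubgroup (g ^ k) (S i₀) = T} := by
    rw [hydef, conjSubgroup_mul, hk₀]
    exact hcon
  set t : G := y * s⁻¹ * y⁻¹ with htdef
  set c : G := t * s with hcdef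
  have hcN : c ∈ N := by
    have h1 : s⁻¹ * y⁻¹ * (s⁻¹)⁻¹ ∈ N := hconjN s⁻¹ (inv_mem hsP) y⁻¹ (inv_mem hyN)
    have h2 : c = y * (s⁻¹ * y⁻¹ * (s⁻¹)⁻¹) := by rw [hcdef, htdef]; group
    rw [h2]
    exact N.mul_mem hyN h1
  have hhN : c * g ∈ N := N.mul_mem hcN hg
  have hhn : (c * g) ^ n = 1 := by
    have h1 : (⟨c * g, hhN⟩ : ↥N) ^ n = 1 := by
      rw [← hexp]; exact Monoid.pow_exponent_eq_one _
    simpa using congrArg (fun z : ↥N => (z : G)) h1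
  -- the complement subgroup K
  set K : Subgroup G := ⨆ (j : Fin r) (_ : j ≠ i₀), S j with hKdef
  have hfacK : ∀ (a : G) (U : Subgroup G), (∃ j, S j = U) → U ≠ S i₀ → a ∈ U → a ∈ K := by
    rintro a U ⟨j, rfl⟩ hne ha
    have hj : j ≠ i₀ := fun hji => hne (by rw [hji])
    have hle : S j ≤ K := by
      rw [hKdef]
      exact le_iSup_of_le j (le_iSup_of_le hj le_rfl)
    exact hle ha
  have htK : ∀ m : ℕ, g ^ m * t * (g ^ m)⁻¹ ∈ K := by
    intro m
    obtain ⟨j, hj⟩ := hperm (g ^ m * y) i₀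
    refine hfacK _ _ ⟨j, hj.symm⟩ ?_ ?_
    · intro hEq
      apply hyM
      refine hΩconj' m _ ?_
      rw [zpow_natCast, ← conjSubgroup_mul, hEq]
      exact hSΩ
    · rw [conjSubgroup_mul]
      have h1 : t ∈ conjSubgroup y (S i₀) := by
        rw [htdef]
        exact conj_mem_conjSubgroup _ y s⁻¹ (inv_mem hsS)
      exact conj_mem_conjSubgroup _ (g ^ m) t h1
  have hsKm : ∀ m : ℕ, 1 ≤ m → m < n → g ^ m * s * (g ^ m)⁻¹ ∈ K := by
    intro m hm1 hmn
    obtain ⟨j, hj⟩ := hperm (g ^ m) i₀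
    refine hfacK _ _ ⟨j, hj.symm⟩ ?_ (conj_mem_conjSubgroup _ (g ^ m) s hsS)
    intro hEq
    have hmmem : (m : ℕ) ∈ ↑(Finset.range n) := by
      simp [Finset.mem_range, hmn]
    have h0mem : (0 : ℕ) ∈ ↑(Finset.range n) := by
      simp [Finset.mem_range, hnpos]
    have heq : conjSubgroup (g ^ m) (S i₀) = conjSubgroup (g ^ (0 : ℕ)) (S i₀) := by
      rw [hEq, pow_zero, conjSubgroup_one]
    have : m = 0 := hinj hmmem h0mem heq
    omega
  -- split the product
  obtain ⟨m', hm'⟩ : ∃ m', n = m' + 1 := ⟨n - 1, by omega⟩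
  have hform := mul_pow_conj_list c g m'
  rw [← hm'] at hform
  set w : G := ((List.range m').map fun j => g ^ (j + 1) * c * (g ^ (j + 1))⁻¹).prod with hwdef
  have hwK : w ∈ K := by
    rw [hwdef]
    refine list_prod_mem ?_
    intro z hz
    simp only [List.mem_map, List.mem_range] at hz
    obtain ⟨j, hj, rfl⟩ := hz
    have h1 : g ^ (j + 1) * c * (g ^ (j + 1))⁻¹
        = (g ^ (j + 1) * t * (g ^ (j + 1))⁻¹) * (g ^ (j + 1) * s * (g ^ (j + 1))⁻¹) := by
      rw [hcdef]; group
    rw [h1]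
    exact K.mul_mem (htK (j + 1)) (hsKm (j + 1) (by omega) (by omega))
  have hcw : c * w = 1 := by
    have h2 : (c * g) ^ n = c * w * g ^ n := hform
    rw [hhn, hgn, mul_one] at h2
    exact h2.symm
  -- conclude s ∈ K, contradiction with disjointness
  have ht0 : t ∈ K := by simpa using htK 0
  have hs' : s = t⁻¹ * w⁻¹ := by
    have h1 : t * (s * w) = 1 := by
      rw [← mul_assoc, ← hcdef]
      exact hcw
    have h2 : t⁻¹ = s * w := mul_eq_one_iff_inv_eq.mp h1
    rw [h2]
    simp [mul_assoc]
  have hsinK : s ∈ K := by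
    rw [hs']
    exact K.mul_mem (K.inv_mem ht0) (K.inv_mem hwK)
  have hdisj : Disjoint (S i₀) K := by
    rw [hKdef]
    exact hindep i₀
  have hbot : s ∈ (⊥ : Subgroup G) := hdisj.le_bot (Subgroup.mem_inf.mpr ⟨hsS, hsinK⟩)
  exact hs1 (Subgroup.mem_bot.mp hbot)
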